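/- arXiv:1210.0959 — 3 statements merged into one kernel-verified Lean document; each statement's English description precedes it below -/
import Mathlib

section
/- For every w_0 ≥ 0 there exists a unique workload fluid model solution w with w(0) = w_0. -/
open MeasureTheory Set Filter Topology
open scoped ENNReal

noncomputable section

namespace OverloadedFIFO

/-- The complement `G(x) = Γ((x, ∞))` of the cumulative distribution function of `Γ`. -/
def Gk (Γ : MeasureTheory.Measure ℝ) (x : ℝ) : ℝ := (Γ (Set.Ioi x)).toReal

/-- Model data: `K` job classes with arrival rates `lam`, service rates `mu`, and
deadline (patience) distributions `Γ`, in the overloaded regime `ρ > 1`.  Each `Γ k` is a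
Borel probability measure on `[0,∞)` (no mass on negatives), with continuous c.d.f.
(no atoms, in particular `Γ k {0} = 0`) and finite mean. -/
structure Data (K : ℕ) where
  lam : Fin K → ℝ
  mu : Fin K → ℝ
  Γ : Fin K → MeasureTheory.Measure ℝ
  lam_pos : ∀ k, 0 < lam k
  mu_pos : ∀ k, 0 < mu k
  Γ_prob : ∀ k, MeasureTheory.IsProbabilityMeasure (Γ k)
  Γ_null_neg : ∀ k, Γ k (Set.Iio 0) = 0
  Γ_noAtom : ∀ k, ∀ x : ℝ, Γ k {x} = 0
  Γ_finite_mean : ∀ k, MeasureTheory.Integrable id (Γ k)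
  rho_gt_one : 1 < ∑ k, lam k / mu k

instance {K : ℕ} (D : Data K) (k : Fin K) : IsProbabilityMeasure (D.Γ k) := D.Γ_prob k

/-- `ρ_k = λ_k / μ_k`. -/
def Data.rho {K : ℕ} (D : Data K) (k : Fin K) : ℝ := D.lam k / D.mu k

/-- `ρ = Σ_k ρ_k`. -/
def Data.rhoTot {K : ℕ} (D : Data K) : ℝ := ∑ k, D.rho k

/-- A workload fluid model solution: a nonnegative function `w` on `[0,∞)` satisfying
`w(t) = w(0) + Σ_k ρ_k ∫_0^t G_k(w(s)) ds − t` for all `t ≥ 0`. -/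
def IsWorkloadSol {K : ℕ} (D : Data K) (w : ℝ → ℝ) : Prop :=
  (∀ t : ℝ, 0 ≤ t → 0 ≤ w t) ∧
  (∀ k : Fin K, ∀ t : ℝ, 0 ≤ t →
    IntervalIntegrable (fun s => Gk (D.Γ k) (w s)) volume 0 t) ∧
  (∀ t : ℝ, 0 ≤ t →
    w t = w 0 + (∑ k, D.rho k * ∫ s in (0:ℝ)..t, Gk (D.Γ k) (w s)) - t)

/-- `w_l = sup {u ≥ 0 : Σ_k ρ_k G_k(u) > 1}`. -/
def wl {K : ℕ} (D : Data K) : ℝ :=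
  sSup {u : ℝ | 0 ≤ u ∧ 1 < ∑ k, D.rho k * Gk (D.Γ k) u}

/-- `w_u = sup {u ≥ 0 : Σ_k ρ_k G_k(u) ≥ 1}`. -/
def wu {K : ℕ} (D : Data K) : ℝ :=
  sSup {u : ℝ | 0 ≤ u ∧ 1 ≤ ∑ k, D.rho k * Gk (D.Γ k) u}

/-- `d_max = max_k sup {x ≥ 0 : G_k(x) > 0} ∈ (0,∞]`, as an extended nonnegative real. -/
def dmax {K : ℕ} (D : Data K) : ℝ≥0∞ :=
  ⨆ k, sSup (ENNReal.ofReal '' {x : ℝ | 0 ≤ x ∧ 0 < Gk (D.Γ k) x})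

/-- `τ(t) = inf {s ∈ [0,t] : w(s) + s ≥ t}`. -/
def tauF (w : ℝ → ℝ) (t : ℝ) : ℝ := sInf {s : ℝ | 0 ≤ s ∧ s ≤ t ∧ t ≤ w s + s}

/-- The nonnegative quadrant `[0,∞)²`. -/
def Q : Set (ℝ × ℝ) := {p | 0 ≤ p.1 ∧ 0 ≤ p.2}

/-- The shift `B_x = {y ∈ [0,∞)² : y − x ∈ B}` of a set `B ⊆ [0,∞)²`. -/
def shift (B : Set (ℝ × ℝ)) (x : ℝ × ℝ) : Set (ℝ × ℝ) :=
  {y | y ∈ Q ∧ (y.1 - x.1, y.2 - x.2) ∈ B}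

/-- Diagonal shift `B_t = B_{(t,t)}`. -/
def shiftd (B : Set (ℝ × ℝ)) (t : ℝ) : Set (ℝ × ℝ) := shift B (t, t)

/-- The set `C = ([0,∞)×{0}) ∪ ({0}×[0,∞))`. -/
def Cset : Set (ℝ × ℝ) := {p | (0 ≤ p.1 ∧ p.2 = 0) ∨ (p.1 = 0 ∧ 0 ≤ p.2)}

/-- The `κ`-enlargement `B^κ = {x ∈ [0,∞)² : inf_{y ∈ B} ‖x−y‖ < κ}` (Euclidean norm). -/
def enlarge (B : Set (ℝ × ℝ)) (κ : ℝ) : Set (ℝ × ℝ) :=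
  {x | x ∈ Q ∧ ∃ y ∈ B, Real.sqrt ((x.1 - y.1) ^ 2 + (x.2 - y.2) ^ 2) < κ}

/-- `w_ϑ = sup {x ≥ 0 : ϑ_+([x,∞)×[0,∞)) > 0}` for a `K`-tuple `ϑ` of measures on `[0,∞)²`. -/
def wMeas {K : ℕ} (ϑ : Fin K → MeasureTheory.Measure (ℝ × ℝ)) : ℝ :=
  sSup {x : ℝ | 0 ≤ x ∧ 0 < ∑ k, ϑ k (Set.Ici x ×ˢ Set.Ici (0:ℝ))}

/-- Membership in the set `I` of admissible initial measures: each `ϑ k` is a finite Borel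
measure on `[0,∞)²`; (I.1) the superposition charges no corner set `C_x`, `x ∈ [0,∞)²`;
(I.2) `w_ϑ < ∞`; (I.3) `max_k G_k(w_ϑ − ε) > 0` for every `ε > 0`. -/
def MemI {K : ℕ} (D : Data K) (ϑ : Fin K → MeasureTheory.Measure (ℝ × ℝ)) : Prop :=
  (∀ k, IsFiniteMeasure (ϑ k)) ∧
  (∀ k, ϑ k Qᶜ = 0) ∧
  (∀ x ∈ Q, (∑ k, ϑ k (shift Cset x)) = 0) ∧
  BddAbove {x : ℝ | 0 ≤ x ∧ 0 < ∑ k, ϑ k (Set.Ici x ×ˢ Set.Ici (0:ℝ))} ∧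
  (∀ ε : ℝ, 0 < ε → ∃ k, 0 < Gk (D.Γ k) (wMeas ϑ - ε))

/-- `δ⁺_w`: the Dirac measure at `w` if `w > 0`, and the zero measure otherwise. -/
def deltaPlus (w : ℝ) : MeasureTheory.Measure ℝ :=
  if 0 < w then MeasureTheory.Measure.dirac w else 0

instance (w : ℝ) : SFinite (deltaPlus w) := by
  unfold deltaPlus; split_ifs <;> infer_instance

/-- `(δ⁺_w × Γ)(B)`, as a real number. -/
def kern (Γ : MeasureTheory.Measure ℝ) (w : ℝ) (B : Set (ℝ × ℝ)) : ℝ :=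
  (((deltaPlus w).prod Γ) B).toReal

/-- A (measure-valued) fluid model solution with initial measure `ϑ`: a family
`ζ(t) = (ζ_1(t),…,ζ_K(t))` of finite Borel measures on `[0,∞)²` with `ζ(0) = ϑ` satisfying
`ζ_k(t)(B) = ϑ_k(B_t) + λ_k ∫_0^t (δ⁺_{w(s)} × Γ_k)(B_{t−s}) ds` for every Borel
`B ⊆ [0,∞)²` and `t ≥ 0`, where `w` is the (unique) workload fluid model solution with
`w(0) = w_ϑ`. -/
def IsFluidSol {K : ℕ} (D : Data K) (ϑ : Fin K → MeasureTheory.Measure (ℝ × ℝ))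
    (ζ : ℝ → Fin K → MeasureTheory.Measure (ℝ × ℝ)) : Prop :=
  ∃ w : ℝ → ℝ, IsWorkloadSol D w ∧ w 0 = wMeas ϑ ∧
    (∀ t : ℝ, 0 ≤ t → ∀ k, IsFiniteMeasure (ζ t k) ∧ ζ t k Qᶜ = 0) ∧
    (∀ k, ζ 0 k = ϑ k) ∧
    (∀ k, ∀ B : Set (ℝ × ℝ), B ⊆ Q → MeasurableSet B → ∀ t : ℝ, 0 ≤ t →
      IntervalIntegrable (fun s => kern (D.Γ k) (w s) (shiftd B (t - s))) volume 0 t ∧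
      ζ t k B = ϑ k (shiftd B t) +
        ENNReal.ofReal (D.lam k * ∫ s in (0:ℝ)..t, kern (D.Γ k) (w s) (shiftd B (t - s))))

/-- The candidate invariant state `θ^w`:
`θ^w_k(B) = λ_k ∫_0^w Γ_k({p ≥ u : (w−u, p−u) ∈ B}) du`. -/
def thetaW {K : ℕ} (D : Data K) (w : ℝ) (k : Fin K) : MeasureTheory.Measure (ℝ × ℝ) :=
  ENNReal.ofReal (D.lam k) •
    MeasureTheory.Measure.map (fun up : ℝ × ℝ => (w - up.1, up.2 - up.1))
      ((((MeasureTheory.volume.restrict (Set.Ioo (0:ℝ) w))).prod (D.Γ k)).restrict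
        {up : ℝ × ℝ | up.1 ≤ up.2})

set_option linter.unusedSectionVars false
variable {Γ : Measure ℝ} [IsProbabilityMeasure Γ]

lemma Gk_nonneg (x : ℝ) : 0 ≤ Gk Γ x := ENNReal.toReal_nonneg

lemma Gk_le_one (x : ℝ) : Gk Γ x ≤ 1 := by
  have := prob_le_one (μ := Γ) (s := Set.Ioi x)
  simpa [Gk] using ENNReal.toReal_le_of_le_ofReal zero_le_one (by simpa using this)

lemma Gk_anti : Antitone (Gk Γ) := by
  intro x y hxy
  exact ENNReal.toReal_mono (measure_ne_top _ _) (measure_mono (Ioi_subset_Ioi hxy))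

lemma Gk_zero (h0 : Γ (Set.Iio 0) = 0) (hatom : Γ {(0:ℝ)} = 0) : Gk Γ 0 = 1 := by
  have hI : Γ (Set.Iic 0) = 0 := by
    have h : Set.Iic (0:ℝ) = Set.Iio 0 ∪ {0} := by ext y; simp [le_iff_lt_or_eq]
    rw [h]
    exact le_antisymm (le_trans (measure_union_le _ _) (by simp [h0, hatom])) zero_le
  have h1 : Γ (Set.Ioi (0:ℝ)) = 1 := by
    have hc := measure_add_measure_compl (μ := Γ) (measurableSet_Iic (a := (0:ℝ)))
    rw [compl_Iic, hI, zero_add, measure_univ] at hc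
    exact hc
  simp [Gk, h1]

lemma abs_Gk_sub (x y : ℝ) (hxy : x ≤ y) :
    Gk Γ x - Gk Γ y = (Γ (Set.Ioc x y)).toReal := by
  have h : Set.Ioi x = Set.Ioc x y ∪ Set.Ioi y := (Set.Ioc_union_Ioi_eq_Ioi hxy).symm
  have hdisj : Disjoint (Set.Ioc x y) (Set.Ioi y) := by
    rw [Set.disjoint_left]; intro a ha hb; exact absurd hb (not_lt.mpr ha.2)
  have := measure_union (μ := Γ) hdisj measurableSet_Ioi
  rw [← h] at this
  rw [Gk, Gk, this, ENNReal.toReal_add (measure_ne_top _ _) (measure_ne_top _ _)]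
  ring

lemma Gk_continuous (hatom : ∀ x : ℝ, Γ {x} = 0) : Continuous (Gk Γ) := by
  rw [Metric.continuous_iff]
  intro x₀ ε hε
  -- Γ (Icc (x₀ - 1/n) (x₀ + 1/n)) tendsto Γ {x₀} = 0
  have hiter : Tendsto (fun n : ℕ => Γ (Set.Icc (x₀ - 1/(n+1)) (x₀ + 1/(n+1)))) atTop
      (𝓝 (Γ (⋂ n : ℕ, Set.Icc (x₀ - 1/(n+1)) (x₀ + 1/(n+1))))) := by
    apply tendsto_measure_iInter_atTop (fun n => (measurableSet_Icc).nullMeasurableSet)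
    · intro m n hmn
      apply Set.Icc_subset_Icc <;>
      · have h1 : (1:ℝ)/(n+1) ≤ 1/(m+1) := by
          apply one_div_le_one_div_of_le <;> [positivity; exact_mod_cast by linarith]
        linarith
    · exact ⟨0, measure_ne_top _ _⟩
  have hint : (⋂ n : ℕ, Set.Icc (x₀ - 1/(n+1)) (x₀ + 1/(n+1))) = {x₀} := by
    ext y
    simp only [Set.mem_iInter, Set.mem_Icc, Set.mem_singleton_iff]
    constructor
    · intro h
      by_contra hy
      obtain ⟨n, hn⟩ := exists_nat_gt (1 / |y - x₀|)
      have habs : 0 < |y - x₀| := abs_pos.mpr (sub_ne_zero.mpr hy)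
      have h1 : 1 / (n+1:ℝ) < |y - x₀| := by
        rw [div_lt_iff₀ (by positivity)]
        rw [div_lt_iff₀ habs] at hn
        nlinarith [habs]
      obtain ⟨h2, h3⟩ := h n
      rcases abs_cases (y - x₀) with ⟨he, _⟩ | ⟨he, _⟩ <;> rw [he] at h1 <;> linarith
    · rintro rfl n; constructor <;> [linarith [one_div_pos.mpr (by positivity : (0:ℝ) < n+1)]; linarith [one_div_pos.mpr (by positivity : (0:ℝ) < n+1)]]
  rw [hint, hatom] at hiter
  have : ∃ n : ℕ, (Γ (Set.Icc (x₀ - 1/(n+1)) (x₀ + 1/(n+1)))).toReal < ε := by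
    have := (ENNReal.tendsto_toReal (by simp)).comp hiter
    simp only [Function.comp_def, ENNReal.toReal_zero] at this
    exact ((this.eventually (eventually_lt_nhds hε)).exists)
  obtain ⟨n, hn⟩ := this
  refine ⟨1/(n+1), by positivity, fun x hx => ?_⟩
  rw [Real.dist_eq] at hx ⊢
  have hsub : ∀ u v : ℝ, x₀ - 1/(n+1) < u → u ≤ v → v < x₀ + 1/(n+1) →
      (Γ (Set.Ioc u v)).toReal < ε := by
    intro u v hu huv hv
    refine lt_of_le_of_lt ?_ hn
    exact ENNReal.toReal_mono (measure_ne_top _ _)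
      (measure_mono (fun z hz => ⟨by rcases hz with ⟨h1,h2⟩; linarith, by rcases hz with ⟨h1,h2⟩; linarith⟩))
  rcases le_or_gt x x₀ with hle | hlt
  · rw [abs_of_nonneg (by linarith [Gk_anti (Γ := Γ) hle] : (0:ℝ) ≤ Gk Γ x - Gk Γ x₀)]
    rw [abs_Gk_sub x x₀ hle]
    exact hsub x x₀ (by rcases abs_cases (x - x₀) with ⟨h,_⟩|⟨h,_⟩ <;> rw [h] at hx <;> linarith)
      hle (by linarith [one_div_pos.mpr (by positivity : (0:ℝ) < n+1)])
  · rw [abs_sub_comm, abs_of_nonneg (by linarith [Gk_anti (Γ := Γ) hlt.le] : (0:ℝ) ≤ Gk Γ x₀ - Gk Γ x)]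
    rw [abs_Gk_sub x₀ x hlt.le]
    exact hsub x₀ x (by linarith [one_div_pos.mpr (by positivity : (0:ℝ) < n+1)]) hlt.le
      (by rcases abs_cases (x - x₀) with ⟨h,_⟩|⟨h,_⟩ <;> rw [h] at hx <;> linarith)

lemma tendsto_Gk_nat : Tendsto (fun n : ℕ => Gk Γ n) atTop (𝓝 0) := by
  have h := tendsto_measure_iInter_atTop (μ := Γ)
    (fun n : ℕ => (measurableSet_Ioi (a := (n:ℝ))).nullMeasurableSet)
    (fun m n hmn => Set.Ioi_subset_Ioi (by exact_mod_cast hmn))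
    ⟨0, measure_ne_top _ _⟩
  have hempty : (⋂ n : ℕ, Set.Ioi ((n:ℝ))) = ∅ := by
    ext x
    simp only [Set.mem_iInter, Set.mem_Ioi, Set.mem_empty_iff_false, iff_false, not_forall, not_lt]
    obtain ⟨n, hn⟩ := exists_nat_gt x
    exact ⟨n, hn.le⟩
  rw [hempty, measure_empty] at h
  have := (ENNReal.tendsto_toReal (by simp)).comp h
  simpa [Function.comp_def, Gk] using this

lemma flow_exists (F : ℝ → ℝ) (hF : Continuous F) (w₀ a : ℝ) (hlt : w₀ < a)
    (hpos : ∀ x, w₀ ≤ x → x < a → 0 < F x) (ha : F a = 0) :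
    ∃ w : ℝ → ℝ, Continuous w ∧ w 0 = w₀ ∧ (∀ t, w₀ ≤ w t ∧ w t ≤ a) ∧
      (∀ t, 0 ≤ t → w t = w₀ + ∫ s in (0:ℝ)..t, F (w s)) := by
  set ψ : ℝ → ℝ := fun x => ∫ u in w₀..x, (F u)⁻¹ with hψ
  -- integrability of (F)⁻¹ on subintervals of [w₀, a)
  have hInt : ∀ x y : ℝ, w₀ ≤ x → x ≤ y → y < a → IntervalIntegrable (fun u => (F u)⁻¹) volume x y := by
    intro x y h1 h2 h3
    apply ContinuousOn.intervalIntegrable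
    apply ContinuousOn.inv₀ hF.continuousOn
    intro u hu
    rw [Set.uIcc_of_le h2] at hu
    exact ne_of_gt (hpos u (le_trans h1 hu.1) (lt_of_le_of_lt hu.2 h3))
  have hderivψ : ∀ x, w₀ ≤ x → x < a → HasDerivAt ψ ((F x)⁻¹) x := by
    intro x h1 h2
    refine intervalIntegral.integral_hasDerivAt_right (hInt w₀ x le_rfl h1 h2) ?_ ?_
    · exact (hF.measurable.inv.aestronglyMeasurable).stronglyMeasurableAtFilter
    · exact hF.continuousAt.inv₀ (ne_of_gt (hpos x h1 h2))
  have hmono : ∀ x y, w₀ ≤ x → x < y → y < a → ψ x < ψ y := by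
    intro x y h1 h2 h3
    have hadd : ψ x + ∫ u in x..y, (F u)⁻¹ = ψ y :=
      intervalIntegral.integral_add_adjacent_intervals (hInt w₀ x le_rfl h1 (lt_trans h2 h3))
        (hInt x y h1 h2.le h3)
    have hpos' : 0 < ∫ u in x..y, (F u)⁻¹ := by
      apply intervalIntegral.intervalIntegral_pos_of_pos_on (hInt x y h1 h2.le h3) _ h2
      intro u hu
      exact inv_pos.mpr (hpos u (le_trans h1 hu.1.le) (lt_trans hu.2 h3))
    linarith
  have hψ0 : ψ w₀ = 0 := intervalIntegral.integral_same
  -- the inverse function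
  set S : ℝ → Set ℝ := fun t => insert w₀ {x | (w₀ ≤ x ∧ x < a) ∧ ψ x ≤ t} with hS
  have hSne : ∀ t, (S t).Nonempty := fun t => ⟨w₀, Set.mem_insert _ _⟩
  have hSbdd : ∀ t, BddAbove (S t) := by
    intro t; refine ⟨a, ?_⟩; rintro x (rfl | ⟨⟨h1, h2⟩, _⟩); exacts [hlt.le, h2.le]
  set w : ℝ → ℝ := fun t => sSup (S t) with hw
  have hwlb : ∀ t, w₀ ≤ w t := fun t => le_csSup (hSbdd t) (Set.mem_insert _ _)
  have hwub : ∀ t, w t ≤ a := fun t => csSup_le (hSne t) (by rintro x (rfl | ⟨⟨h1, h2⟩, _⟩); exacts [hlt.le, h2.le])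
  have hwmono : Monotone w := by
    intro s t hst
    apply csSup_le_csSup (hSbdd t) (hSne s)
    rintro x (rfl | ⟨h1, h2⟩); exacts [Set.mem_insert _ _, Set.mem_insert_of_mem _ ⟨h1, le_trans h2 hst⟩]
  have hwge : ∀ t x, w₀ ≤ x → x < a → ψ x ≤ t → x ≤ w t := by
    intro t x h1 h2 h3; exact le_csSup (hSbdd t) (Set.mem_insert_of_mem _ ⟨⟨h1, h2⟩, h3⟩)
  -- K2 : pinning down ψ (w t) = t when w t < a and t ≥ 0
  have hK2 : ∀ t, 0 ≤ t → w t < a → ψ (w t) = t := by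
    intro t ht h2
    set m := w t with hm
    have h1 : w₀ ≤ m := hwlb t
    have hψc := (hderivψ m h1 h2).continuousAt
    rw [Metric.continuousAt_iff] at hψc
    have hle : ψ m ≤ t := by
      by_contra hc
      push_neg at hc
      have hmw : w₀ < m := by
        rcases eq_or_lt_of_le h1 with heq | h
        · rw [← heq, hψ0] at hc; linarith
        · exact h
      obtain ⟨δ, hδ, hδ'⟩ := hψc (ψ m - t) (by linarith)
      set δ' := min δ (m - w₀) with hδ'def
      have hδ'pos : 0 < δ' := lt_min hδ (by linarith)
      have : w t ≤ m - δ'/2 := by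
        apply csSup_le (hSne t)
        rintro y (hy0 | ⟨⟨hy1, hy2⟩, hy3⟩)
        · have h' : δ' ≤ m - w₀ := min_le_right _ _
          rw [hy0]; linarith
        · by_contra hyc
          push_neg at hyc
          have hym : y ≤ m := le_csSup (hSbdd t) (Set.mem_insert_of_mem _ ⟨⟨hy1, hy2⟩, hy3⟩)
          have : dist y m < δ := by
            rw [Real.dist_eq, abs_of_nonpos (by linarith)]
            have : δ' ≤ δ := min_le_left _ _
            linarith
          have := hδ' this
          rw [Real.dist_eq] at this
          have := abs_lt.mp this
          linarith [this.1]
      linarith [hm ▸ this]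
    rcases eq_or_lt_of_le hle with h | h
    · exact h
    exfalso
    obtain ⟨δ, hδ, hδ'⟩ := hψc (t - ψ m) (by linarith)
    set x := min (m + δ/2) ((m + a)/2) with hx
    have hxm : m < x := lt_min (by linarith) (by linarith)
    have hxa : x < a := lt_of_le_of_lt (min_le_right _ _) (by linarith)
    have hxd : dist x m < δ := by
      rw [Real.dist_eq, abs_of_nonneg (by linarith)]
      have : x ≤ m + δ/2 := min_le_left _ _
      linarith
    have hψx : ψ x < t := by
      have := abs_lt.mp ((Real.dist_eq _ _) ▸ hδ' hxd)
      linarith [this.2]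
    have := hwge t x (le_trans h1 hxm.le) hxa hψx.le
    linarith [hm ▸ this]
  -- K3 : if w t = a then ψ x ≤ t for all x in [w₀, a)
  have hK3 : ∀ t, w t = a → ∀ x, w₀ ≤ x → x < a → ψ x < t := by
    intro t hwt x h1 h2
    have : ∃ y ∈ S t, x < y := exists_lt_of_lt_csSup (hSne t) (by rw [hw] at hwt; simp only at hwt; linarith [hwt]; )
    obtain ⟨y, hy, hxy⟩ := this
    rcases hy with rfl | ⟨⟨hy1, hy2⟩, hy3⟩
    · linarith
    · exact lt_of_lt_of_le (hmono x y h1 hxy hy2) hy3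
  have hwneg : ∀ t, t < 0 → w t = w₀ := by
    intro t ht
    refine le_antisymm (csSup_le (hSne t) ?_) (hwlb t)
    rintro x (rfl | ⟨⟨h1, h2⟩, h3⟩)
    · rfl
    · rcases eq_or_lt_of_le h1 with rfl | h1'
      · rfl
      · exfalso
        have : (0:ℝ) < ψ x := by simpa [hψ0] using hmono w₀ x le_rfl h1' h2
        linarith
  -- continuity
  have hwcont : Continuous w := by
    rw [Metric.continuous_iff]
    intro t₀ ε hε
    set m := w t₀ with hm
    have hlow : ∃ δ₁ > 0, ∀ t, |t - t₀| < δ₁ → m - ε < w t := by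
      rcases eq_or_lt_of_le (hwlb t₀) with h | h
      · exact ⟨1, one_pos, fun t _ => by
          have h2 : m = w t₀ := hm
          linarith [hwlb t]⟩
      · obtain ⟨xm, hx1, hx2⟩ : ∃ xm, max w₀ (m - ε) < xm ∧ xm < m :=
          exists_between (max_lt h (by linarith))
        have hw₀x : w₀ < xm := lt_of_le_of_lt (le_max_left _ _) hx1
        have hxma : xm < a := lt_of_lt_of_le hx2 (hwub t₀)
        have hψx : ψ xm < t₀ := by
          obtain ⟨y, hy, hxy⟩ : ∃ y ∈ S t₀, xm < y := exists_lt_of_lt_csSup (hSne t₀) hx2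
          rcases hy with rfl | ⟨⟨hy1, hy2⟩, hy3⟩
          · linarith
          · exact lt_of_lt_of_le (hmono xm y hw₀x.le hxy hy2) hy3
        refine ⟨t₀ - ψ xm, by linarith, fun t htd => ?_⟩
        have : ψ xm ≤ t := by
          rcases abs_lt.mp htd with ⟨h1, h2⟩; linarith
        have := hwge t xm hw₀x.le hxma this
        have hmε : m - ε < xm := lt_of_le_of_lt (le_max_right _ _) hx1
        linarith
    have hupp : ∃ δ₂ > 0, ∀ t, |t - t₀| < δ₂ → w t < m + ε := by
      rcases eq_or_lt_of_le (hwub t₀) with h | h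
      · exact ⟨1, one_pos, fun t _ => by
          have h2 : m = w t₀ := hm
          linarith [hwub t]⟩
      · set xp := min (m + ε/2) ((m + a)/2) with hxp
        have hmx : m < xp := lt_min (by linarith) (by linarith)
        have hxa : xp < a := lt_of_le_of_lt (min_le_right _ _) (by linarith)
        have hxε : xp < m + ε := lt_of_le_of_lt (min_le_left _ _) (by linarith)
        have hw₀x : w₀ ≤ xp := le_trans (hwlb t₀) hmx.le
        have hψx : t₀ < ψ xp := by
          by_contra hc
          push_neg at hc
          have := hwge t₀ xp hw₀x hxa hc
          linarith [hm ▸ this]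
        refine ⟨ψ xp - t₀, by linarith, fun t htd => ?_⟩
        have htψ : t < ψ xp := by
          rcases abs_lt.mp htd with ⟨h1, h2⟩; linarith
        have : w t ≤ xp := by
          apply csSup_le (hSne t)
          rintro y (rfl | ⟨⟨hy1, hy2⟩, hy3⟩)
          · exact hw₀x
          · by_contra hyc
            push_neg at hyc
            exact absurd hy3 (not_le.mpr (lt_trans htψ (hmono xp y hw₀x hyc hy2)))
        linarith
    obtain ⟨δ₁, hδ₁, h₁⟩ := hlow
    obtain ⟨δ₂, hδ₂, h₂⟩ := hupp
    refine ⟨min δ₁ δ₂, lt_min hδ₁ hδ₂, fun t htd => ?_⟩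
    rw [Real.dist_eq] at htd ⊢
    have e1 := h₁ t (lt_of_lt_of_le htd (min_le_left _ _))
    have e2 := h₂ t (lt_of_lt_of_le htd (min_le_right _ _))
    rw [abs_lt]
    constructor <;> [linarith; linarith]
  -- value at 0
  have hw0 : w 0 = w₀ := by
    refine le_antisymm (csSup_le (hSne 0) ?_) (hwlb 0)
    rintro x (rfl | ⟨⟨h1, h2⟩, h3⟩)
    · rfl
    · rcases eq_or_lt_of_le h1 with rfl | h1'
      · rfl
      · exfalso; have : (0:ℝ) < ψ x := by simpa [hψ0] using hmono w₀ x le_rfl h1' h2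
        linarith
  -- derivative
  have hwderiv : ∀ t, 0 < t → w t < a → HasDerivAt w (F (w t)) t := by
    intro t ht hwt
    have hcw : ContinuousAt w t := hwcont.continuousAt
    have hFw : 0 < F (w t) := hpos _ (hwlb t) hwt
    have hev : ∀ᶠ y in 𝓝 t, ψ (w y) = y := by
      have h1 : ∀ᶠ y in 𝓝 t, w y < a := hcw.eventually_lt continuousAt_const hwt
      have h2 : ∀ᶠ y in 𝓝 t, 0 < y := eventually_gt_nhds ht
      filter_upwards [h1, h2] with y hy1 hy2
      exact hK2 y hy2.le hy1
    have := HasDerivAt.of_local_left_inverse hcw (hderivψ (w t) (hwlb t) hwt) (by positivity) hev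
    simpa [inv_inv] using this
  refine ⟨w, hwcont, hw0, fun t => ⟨hwlb t, hwub t⟩, fun t ht => ?_⟩
  rcases eq_or_lt_of_le ht with rfl | ht'
  · simp [hw0]
  have key : ∫ s in (0:ℝ)..t, F (w s) = w t - w 0 := by
    apply intervalIntegral.integral_eq_sub_of_hasDeriv_right_of_le ht
      (hwcont.continuousOn) ?_ ((hF.comp hwcont).intervalIntegrable 0 t)
    intro x hx
    rcases lt_or_eq_of_le (hwub x) with h | h
    · exact (hwderiv x hx.1 h).hasDerivWithinAt
    · have hconst : ∀ y ∈ Set.Ioi x, w y = a := by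
        intro y hy
        exact le_antisymm (hwub y) (h ▸ hwmono (le_of_lt hy))
      have : HasDerivWithinAt w 0 (Set.Ioi x) x :=
        (hasDerivWithinAt_const x _ a).congr hconst h
      simpa [h, ha] using this
  rw [key, hw0]; ring

variable {K : ℕ}



/-- `H(x) = Σ ρ_k G_k(x) − 1`. -/
def Hfun (D : Data K) (x : ℝ) : ℝ := (∑ k, D.rho k * Gk (D.Γ k) x) - 1

lemma Hfun_continuous (D : Data K) : Continuous (Hfun D) := by
  apply Continuous.sub _ continuous_const
  exact continuous_finset_sum _ fun k _ => continuous_const.mul (Gk_continuous (D.Γ_noAtom k))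

/-- Regularity of workload solutions. -/
lemma sol_continuousOn (D : Data K) {w : ℝ → ℝ} (hsol : IsWorkloadSol D w) :
    ContinuousOn w (Set.Ici 0) := by
  obtain ⟨hnn, hint, heq⟩ := hsol
  have hIc : ∀ k : Fin K, ContinuousOn (fun t => ∫ s in (0:ℝ)..t, Gk (D.Γ k) (w s)) (Set.Ici 0) := by
    intro k x hx
    have hx0 : (0:ℝ) ≤ x := hx
    have h1 : IntervalIntegrable (fun s => Gk (D.Γ k) (w s)) volume 0 (x+1) :=
      hint k (x+1) (by linarith)
    have h2 : IntegrableOn (fun s => Gk (D.Γ k) (w s)) (Set.uIcc 0 (x+1)) volume := by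
      rw [Set.uIcc_of_le (by linarith)]
      exact (intervalIntegrable_iff_integrableOn_Icc_of_le (by linarith)).mp h1
    have h3 := intervalIntegral.continuousOn_primitive_interval h2
    have h4 : ContinuousWithinAt (fun t => ∫ s in (0:ℝ)..t, Gk (D.Γ k) (w s)) (Set.uIcc 0 (x+1)) x := by
      apply h3 x
      rw [Set.uIcc_of_le (by linarith)]
      exact ⟨hx0, by linarith⟩
    apply h4.mono_of_mem_nhdsWithin
    rw [Set.uIcc_of_le (by linarith)]
    have : Set.Ici (0:ℝ) ∩ Set.Iio (x+1) ∈ 𝓝[Set.Ici 0] x :=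
      inter_mem_nhdsWithin _ (Iio_mem_nhds (by linarith))
    exact mem_of_superset this (fun y hy => ⟨hy.1, hy.2.le⟩)
  have hbig : ContinuousOn
      (fun t => w 0 + (∑ k, D.rho k * ∫ s in (0:ℝ)..t, Gk (D.Γ k) (w s)) - t) (Set.Ici 0) := by
    apply ContinuousOn.sub _ continuousOn_id
    apply ContinuousOn.add continuousOn_const
    exact continuousOn_finset_sum _ fun k _ => continuousOn_const.mul (hIc k)
  exact hbig.congr (fun t ht => heq t ht)

lemma sol_hasDerivAt (D : Data K) {w : ℝ → ℝ} (hsol : IsWorkloadSol D w) {t : ℝ} (ht : 0 < t) :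
    HasDerivAt w (Hfun D (w t)) t := by
  obtain ⟨hnn, hint, heq⟩ := hsol
  have hwc := sol_continuousOn D ⟨hnn, hint, heq⟩
  have hGkc : ∀ k : Fin K, ContinuousOn (fun s => Gk (D.Γ k) (w s)) (Set.Ici 0) :=
    fun k => (Gk_continuous (D.Γ_noAtom k)).comp_continuousOn hwc
  have hI : ∀ k : Fin K, HasDerivAt (fun u => ∫ s in (0:ℝ)..u, Gk (D.Γ k) (w s))
      (Gk (D.Γ k) (w t)) t := by
    intro k
    apply intervalIntegral.integral_hasDerivAt_right (hint k t ht.le)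
    · exact ⟨Set.Ioi 0, Ioi_mem_nhds ht,
        ((hGkc k).mono (Set.Ioi_subset_Ici le_rfl)).aestronglyMeasurable measurableSet_Ioi⟩
    · exact ((hGkc k) t (le_of_lt ht)).continuousAt (Ici_mem_nhds ht)
  have hRHS : HasDerivAt
      (fun u => w 0 + (∑ k, D.rho k * ∫ s in (0:ℝ)..u, Gk (D.Γ k) (w s)) - u)
      (Hfun D (w t)) t := by
    have h1 : HasDerivAt (fun u => ∑ k, D.rho k * ∫ s in (0:ℝ)..u, Gk (D.Γ k) (w s))
        (∑ k, D.rho k * Gk (D.Γ k) (w t)) t :=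
      HasDerivAt.fun_sum fun k _ => (hI k).const_mul _
    simpa [Hfun] using (h1.const_add (w 0)).fun_sub (hasDerivAt_id t)
  apply hRHS.congr_of_eventuallyEq
  filter_upwards [Ioi_mem_nhds ht] with y hy
  exact heq y (le_of_lt hy)

section Main
variable {K : ℕ}

lemma Hfun_exists_nonpos (D : Data K) (c : ℝ) : ∃ b : ℝ, c ≤ b ∧ Hfun D b ≤ 0 := by
  have hsum : Tendsto (fun n : ℕ => ∑ k, D.rho k * Gk (D.Γ k) n) atTop (𝓝 0) := by
    have := tendsto_finset_sum (Finset.univ : Finset (Fin K))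
      (fun k _ => Tendsto.const_mul (D.rho k) (tendsto_Gk_nat (Γ := D.Γ k)))
    simpa using this
  have h1 : ∀ᶠ n : ℕ in atTop, (∑ k, D.rho k * Gk (D.Γ k) n) < 1 :=
    hsum.eventually (eventually_lt_nhds one_pos)
  have h2 : ∀ᶠ n : ℕ in atTop, c ≤ (n : ℝ) := tendsto_natCast_atTop_atTop.eventually_ge_atTop c
  obtain ⟨n, hn1, hn2⟩ := (h1.and h2).exists
  exact ⟨n, hn2, by simp only [Hfun]; linarith⟩

lemma Hfun_anti (D : Data K) : Antitone (Hfun D) := by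
  intro x y hxy
  apply sub_le_sub_right
  apply Finset.sum_le_sum
  intro k _
  exact mul_le_mul_of_nonneg_left (Gk_anti hxy) (le_of_lt (div_pos (D.lam_pos k) (D.mu_pos k)))

lemma Hfun_zero_pos (D : Data K) : 0 < Hfun D 0 := by
  have h : ∀ k : Fin K, Gk (D.Γ k) 0 = 1 := fun k => Gk_zero (D.Γ_null_neg k) (D.Γ_noAtom k 0)
  have : Hfun D 0 = (∑ k, D.rho k) - 1 := by
    simp only [Hfun]
    congr 1
    exact Finset.sum_congr rfl fun k _ => by rw [h k, mul_one]
  rw [this]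
  have := D.rho_gt_one
  simp only [Data.rho]
  linarith [D.rho_gt_one]

lemma isWorkloadSol_of (D : Data K) (w : ℝ → ℝ) (hc : Continuous w)
    (hnn : ∀ t, 0 ≤ t → 0 ≤ w t)
    (heq : ∀ t, 0 ≤ t → w t = w 0 + ∫ s in (0:ℝ)..t, Hfun D (w s)) :
    IsWorkloadSol D w := by
  have hcomp : ∀ k : Fin K, Continuous (fun s => Gk (D.Γ k) (w s)) :=
    fun k => (Gk_continuous (D.Γ_noAtom k)).comp hc
  have hint : ∀ k : Fin K, ∀ t : ℝ, IntervalIntegrable (fun s => Gk (D.Γ k) (w s)) volume 0 t :=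
    fun k t => (hcomp k).intervalIntegrable 0 t
  refine ⟨hnn, fun k t _ => hint k t, fun t ht => ?_⟩
  have hsplit : ∫ s in (0:ℝ)..t, Hfun D (w s)
      = (∑ k, D.rho k * ∫ s in (0:ℝ)..t, Gk (D.Γ k) (w s)) - t := by
    have hintsum : IntervalIntegrable (fun s => ∑ k, D.rho k * Gk (D.Γ k) (w s)) volume 0 t :=
      (continuous_finset_sum _ fun k _ => continuous_const.mul (hcomp k)).intervalIntegrable 0 t
    rw [show (fun s => Hfun D (w s))
        = fun s => (∑ k, D.rho k * Gk (D.Γ k) (w s)) - (fun _ => (1:ℝ)) s from rfl]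
    rw [intervalIntegral.integral_sub hintsum (intervalIntegrable_const)]
    rw [intervalIntegral.integral_finset_sum (fun k _ =>
      ((hcomp k).intervalIntegrable 0 t).const_mul _)]
    simp only [intervalIntegral.integral_const_mul, intervalIntegral.integral_const,
      smul_eq_mul, mul_one, sub_zero]
  rw [heq t ht, hsplit]
  ring

lemma workload_exists (D : Data K) (w₀ : ℝ) (hw₀ : 0 ≤ w₀) :
    ∃ w : ℝ → ℝ, IsWorkloadSol D w ∧ w 0 = w₀ := by
  have hHc := Hfun_continuous D
  rcases lt_trichotomy (Hfun D w₀) 0 with hneg | hzero | hpos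
  · -- decreasing case, via reflection
    set Ht : ℝ → ℝ := fun x => - Hfun D (-x) with hHt
    have hHtc : Continuous Ht := (hHc.comp continuous_neg).neg
    set v₀ : ℝ := -w₀ with hv₀
    have hHtv₀ : 0 < Ht v₀ := by simp only [hHt, hv₀, neg_neg]; linarith
    set A : Set ℝ := {x | v₀ ≤ x ∧ Ht x ≤ 0} with hA
    have h0A : (0:ℝ) ∈ A := ⟨by simp only [hv₀]; linarith, by
      simp only [hHt, neg_zero]; linarith [Hfun_zero_pos D]⟩
    have hAne : A.Nonempty := ⟨0, h0A⟩
    have hAbdd : BddBelow A := ⟨v₀, fun x hx => hx.1⟩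
    have hAclosed : IsClosed A := (isClosed_Ici.preimage continuous_id).inter
      (isClosed_Iic.preimage hHtc)
    set a : ℝ := sInf A with ha
    have haA : a ∈ A := hAclosed.csInf_mem hAne hAbdd
    have hanonpos : a ≤ 0 := csInf_le hAbdd h0A
    have hva : v₀ < a := lt_of_le_of_ne haA.1 (by
      intro h; rw [← h] at haA; exact absurd haA.2 (not_le.mpr hHtv₀))
    have hposI : ∀ x, v₀ ≤ x → x < a → 0 < Ht x := by
      intro x h1 h2
      by_contra hcon
      push_neg at hcon
      exact absurd (csInf_le hAbdd ⟨h1, hcon⟩) (not_le.mpr h2)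
    have ha0 : Ht a = 0 := by
      refine le_antisymm haA.2 ?_
      have htend : Tendsto Ht (𝓝[<] a) (𝓝 (Ht a)) :=
        (hHtc.continuousAt).continuousWithinAt.tendsto
      apply ge_of_tendsto htend
      filter_upwards [Ioo_mem_nhdsLT_of_mem (Set.right_mem_Ioc.mpr hva)] with x hx
      exact (hposI x hx.1.le hx.2).le
    obtain ⟨v, hvc, hv0, hvbd, hveq⟩ := flow_exists Ht hHtc v₀ a hva hposI ha0
    refine ⟨fun t => -(v t), isWorkloadSol_of D _ hvc.neg ?_ ?_, by simp only [hv0, hv₀, neg_neg]⟩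
    · intro t _
      have := (hvbd t).2
      linarith
    · intro t ht
      have he := hveq t ht
      have hni : ∫ s in (0:ℝ)..t, Ht (v s) = - ∫ s in (0:ℝ)..t, Hfun D (-(v s)) := by
        rw [← intervalIntegral.integral_neg]
      rw [hni] at he
      show -(v t) = -(v 0) + ∫ s in (0:ℝ)..t, Hfun D (-(v s))
      rw [hv0]
      linarith [he]
  · exact ⟨fun _ => w₀, isWorkloadSol_of D _ continuous_const (fun _ _ => hw₀)
      (fun t ht => by simp [hzero]), rfl⟩
  · -- increasing case
    set A : Set ℝ := {x | w₀ ≤ x ∧ Hfun D x ≤ 0} with hA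
    obtain ⟨b, hb1, hb2⟩ := Hfun_exists_nonpos D w₀
    have hAne : A.Nonempty := ⟨b, hb1, hb2⟩
    have hAbdd : BddBelow A := ⟨w₀, fun x hx => hx.1⟩
    have hAclosed : IsClosed A := (isClosed_Ici.preimage continuous_id).inter
      (isClosed_Iic.preimage hHc)
    set a : ℝ := sInf A with ha
    have haA : a ∈ A := hAclosed.csInf_mem hAne hAbdd
    have hva : w₀ < a := lt_of_le_of_ne haA.1 (by
      intro h; rw [← h] at haA; exact absurd haA.2 (not_le.mpr hpos))
    have hposI : ∀ x, w₀ ≤ x → x < a → 0 < Hfun D x := by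
      intro x h1 h2
      by_contra hcon
      push_neg at hcon
      exact absurd (csInf_le hAbdd ⟨h1, hcon⟩) (not_le.mpr h2)
    have ha0 : Hfun D a = 0 := by
      refine le_antisymm haA.2 ?_
      have htend : Tendsto (Hfun D) (𝓝[<] a) (𝓝 (Hfun D a)) :=
        (hHc.continuousAt).continuousWithinAt.tendsto
      apply ge_of_tendsto htend
      filter_upwards [Ioo_mem_nhdsLT_of_mem (Set.right_mem_Ioc.mpr hva)] with x hx
      exact (hposI x hx.1.le hx.2).le
    obtain ⟨w, hwc, hw0, hwbd, hweq⟩ := flow_exists (Hfun D) hHc w₀ a hva hposI ha0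
    refine ⟨w, isWorkloadSol_of D _ hwc (fun t _ => le_trans hw₀ (hwbd t).1) ?_, hw0⟩
    intro t ht
    rw [hw0]
    exact hweq t ht

end Main

/-- For every `w_0 ≥ 0` there exists a unique workload fluid model solution
`w` with `w(0) = w_0` (unique as a function on `[0,∞)`). -/
theorem workload_exists_unique {K : ℕ} (D : Data K) (w₀ : ℝ) (hw₀ : 0 ≤ w₀) :
    (∃ w : ℝ → ℝ, IsWorkloadSol D w ∧ w 0 = w₀) ∧
    (∀ w₁ w₂ : ℝ → ℝ, IsWorkloadSol D w₁ → IsWorkloadSol D w₂ →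
      w₁ 0 = w₀ → w₂ 0 = w₀ → ∀ t : ℝ, 0 ≤ t → w₁ t = w₂ t) := by
  refine ⟨workload_exists D w₀ hw₀, ?_⟩
  intro w₁ w₂ h₁ h₂ h₁0 h₂0 t ht
  rcases eq_or_lt_of_le ht with rfl | ht'
  · rw [h₁0, h₂0]
  have hc1 := sol_continuousOn D h₁
  have hc2 := sol_continuousOn D h₂
  have hIcc : Set.Icc (0:ℝ) t ⊆ Set.Ici 0 := Set.Icc_subset_Ici_self
  set g : ℝ → ℝ := fun s => (Hfun D (w₁ s) - Hfun D (w₂ s)) * (w₁ s - w₂ s)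
    + (w₁ s - w₂ s) * (Hfun D (w₁ s) - Hfun D (w₂ s)) with hg
  have key : ∫ y in (0:ℝ)..t, g y
      = (w₁ t - w₂ t) * (w₁ t - w₂ t) - (w₁ 0 - w₂ 0) * (w₁ 0 - w₂ 0) := by
    apply intervalIntegral.integral_eq_sub_of_hasDeriv_right_of_le ht
      (f := fun s => (w₁ s - w₂ s) * (w₁ s - w₂ s))
    · exact (((hc1.sub hc2).mul (hc1.sub hc2)).mono hIcc)
    · intro x hx
      have d1 := sol_hasDerivAt D h₁ hx.1
      have d2 := sol_hasDerivAt D h₂ hx.1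
      exact ((d1.sub d2).mul (d1.sub d2)).hasDerivWithinAt
    · apply ContinuousOn.intervalIntegrable
      rw [Set.uIcc_of_le ht]
      have hH1 : ContinuousOn (fun s => Hfun D (w₁ s)) (Set.Icc 0 t) :=
        (Hfun_continuous D).comp_continuousOn (hc1.mono hIcc)
      have hH2 : ContinuousOn (fun s => Hfun D (w₂ s)) (Set.Icc 0 t) :=
        (Hfun_continuous D).comp_continuousOn (hc2.mono hIcc)
      have hu : ContinuousOn (fun s => w₁ s - w₂ s) (Set.Icc 0 t) :=
        (hc1.mono hIcc).sub (hc2.mono hIcc)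
      exact ((hH1.sub hH2).mul hu).add (hu.mul (hH1.sub hH2))
  have hgle : ∀ y, g y ≤ 0 := by
    intro y
    simp only [hg]
    rcases le_total (w₁ y) (w₂ y) with h | h
    · nlinarith [Hfun_anti D h]
    · nlinarith [Hfun_anti D h]
  have hintle : ∫ y in (0:ℝ)..t, g y ≤ 0 := by
    have h0 : 0 ≤ ∫ y in (0:ℝ)..t, -g y :=
      intervalIntegral.integral_nonneg ht (fun u _ => by linarith [hgle u])
    rw [intervalIntegral.integral_neg] at h0
    linarith
  have hu0 : w₁ 0 - w₂ 0 = 0 := by rw [h₁0, h₂0]; ring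
  have hfinal : (w₁ t - w₂ t) * (w₁ t - w₂ t) ≤ 0 := by
    rw [hu0] at key
    simp only [mul_zero, zero_mul, sub_zero] at key
    linarith [key ▸ hintle]
  have := mul_self_nonneg (w₁ t - w₂ t)
  have hz : (w₁ t - w₂ t) * (w₁ t - w₂ t) = 0 := le_antisymm hfinal this
  have := mul_self_eq_zero.mp hz
  linarith

end OverloadedFIFO
end
end

section
/- Relative ordering of workload fluid model solutions: if w_1 and w_2 are workload fluid model solutions with w_1(0) ≤ w_2(0), then w_1(t) ≤ w_2(t) for all t ≥ 0. -/
open MeasureTheory Set Filter Topology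
open scoped ENNReal

noncomputable section

namespace OverloadedFIFO

lemma Gk_antitone (Γ : MeasureTheory.Measure ℝ) [IsFiniteMeasure Γ] : Antitone (Gk Γ) := by
  intro x y hxy
  exact ENNReal.toReal_mono (measure_ne_top Γ _) (measure_mono (Set.Ioi_subset_Ioi hxy))

lemma rho_nonneg {K : ℕ} (D : Data K) (k : Fin K) : 0 ≤ D.rho k :=
  div_nonneg (D.lam_pos k).le (D.mu_pos k).le

/-- Relative ordering: if `w₁, w₂` are workload fluid model solutions with
`w₁(0) ≤ w₂(0)`, then `w₁(t) ≤ w₂(t)` for all `t ≥ 0`. -/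
theorem workload_ordering {K : ℕ} (D : Data K) (w₁ w₂ : ℝ → ℝ)
    (h₁ : IsWorkloadSol D w₁) (h₂ : IsWorkloadSol D w₂) (h0 : w₁ 0 ≤ w₂ 0) :
    ∀ t : ℝ, 0 ≤ t → w₁ t ≤ w₂ t := by
  obtain ⟨h₁nn, h₁int, h₁eq⟩ := h₁
  obtain ⟨h₂nn, h₂int, h₂eq⟩ := h₂
  intro t₀ ht₀
  by_contra hlt
  push_neg at hlt
  -- continuity of each solution on [0, t₀]
  have hcont : ∀ (w : ℝ → ℝ),
      (∀ k : Fin K, ∀ t : ℝ, 0 ≤ t → IntervalIntegrable (fun s => Gk (D.Γ k) (w s)) volume 0 t) →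
      (∀ t : ℝ, 0 ≤ t → w t = w 0 + (∑ k, D.rho k * ∫ s in (0:ℝ)..t, Gk (D.Γ k) (w s)) - t) →
      ContinuousOn w (Set.Icc 0 t₀) := by
    intro w hint heq
    have h1 : ContinuousOn
        (fun t => w 0 + (∑ k, D.rho k * ∫ s in (0:ℝ)..t, Gk (D.Γ k) (w s)) - t)
        (Set.Icc 0 t₀) := by
      refine ContinuousOn.sub (ContinuousOn.add continuousOn_const ?_) (continuousOn_id)
      refine continuousOn_finset_sum _ (fun k _ => ContinuousOn.mul continuousOn_const ?_)
      have := intervalIntegral.continuousOn_primitive_interval'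
        (hint k t₀ ht₀) (Set.left_mem_uIcc (a := (0:ℝ)) (b := t₀))
      rwa [Set.uIcc_of_le ht₀] at this
    exact h1.congr (fun t ht => heq t ht.1)
  have hc₁ := hcont w₁ h₁int h₁eq
  have hc₂ := hcont w₂ h₂int h₂eq
  -- the set where w₁ ≤ w₂
  set S : Set ℝ := Set.Icc 0 t₀ ∩ (fun s => w₁ s - w₂ s) ⁻¹' Set.Iic 0 with hS
  have hScl : IsClosed S :=
    ContinuousOn.preimage_isClosed_of_isClosed (hc₁.sub hc₂) isClosed_Icc isClosed_Iic
  have h0S : (0:ℝ) ∈ S := ⟨⟨le_refl 0, ht₀⟩, by simpa using h0⟩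
  have hSbdd : BddAbove S := ⟨t₀, fun x hx => hx.1.2⟩
  set σ := sSup S with hσ
  have hσS : σ ∈ S := hScl.csSup_mem ⟨0, h0S⟩ hSbdd
  have hσ0 : 0 ≤ σ := hσS.1.1
  have hσt₀ : σ ≤ t₀ := hσS.1.2
  have hσle : w₁ σ ≤ w₂ σ := by have := hσS.2; simpa using this
  have hσlt : σ < t₀ := by
    rcases lt_or_eq_of_le hσt₀ with h | h
    · exact h
    · exfalso; rw [h] at hσle; linarith
  -- on (σ, t₀], w₂ < w₁
  have hkey : ∀ s ∈ Set.Ioc σ t₀, w₂ s ≤ w₁ s := by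
    intro s hs
    by_contra hcon
    push_neg at hcon
    have : s ∈ S := ⟨⟨le_trans hσ0 hs.1.le, hs.2⟩, by simp [sub_nonpos]; linarith⟩
    exact absurd (le_csSup hSbdd this) (not_le.2 hs.1)
  -- integrability facts
  have hii : ∀ (w : ℝ → ℝ),
      (∀ k : Fin K, ∀ t : ℝ, 0 ≤ t → IntervalIntegrable (fun s => Gk (D.Γ k) (w s)) volume 0 t) →
      ∀ k : Fin K, IntervalIntegrable (fun s => Gk (D.Γ k) (w s)) volume σ t₀ := by
    intro w hint k
    refine (hint k t₀ ht₀).mono_set ?_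
    rw [Set.uIcc_of_le hσt₀, Set.uIcc_of_le ht₀]
    exact Set.Icc_subset_Icc hσ0 le_rfl
  have hii0 : ∀ (w : ℝ → ℝ),
      (∀ k : Fin K, ∀ t : ℝ, 0 ≤ t → IntervalIntegrable (fun s => Gk (D.Γ k) (w s)) volume 0 t) →
      ∀ k : Fin K, IntervalIntegrable (fun s => Gk (D.Γ k) (w s)) volume 0 σ :=
    fun w hint k => hint k σ hσ0
  -- splitting identity: w t₀ = w σ + Σ ρₖ ∫_σ^{t₀} - (t₀ - σ)
  have hsplit : ∀ (w : ℝ → ℝ)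
      (hint : ∀ k : Fin K, ∀ t : ℝ, 0 ≤ t → IntervalIntegrable (fun s => Gk (D.Γ k) (w s)) volume 0 t),
      (∀ t : ℝ, 0 ≤ t → w t = w 0 + (∑ k, D.rho k * ∫ s in (0:ℝ)..t, Gk (D.Γ k) (w s)) - t) →
      w t₀ = w σ + (∑ k, D.rho k * ∫ s in σ..t₀, Gk (D.Γ k) (w s)) - (t₀ - σ) := by
    intro w hint heq
    have hadd : ∀ k : Fin K,
        (∫ s in (0:ℝ)..σ, Gk (D.Γ k) (w s)) + (∫ s in σ..t₀, Gk (D.Γ k) (w s))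
          = ∫ s in (0:ℝ)..t₀, Gk (D.Γ k) (w s) := fun k =>
      intervalIntegral.integral_add_adjacent_intervals (hii0 w hint k) (hii w hint k)
    have h1 := heq t₀ ht₀
    have h2 := heq σ hσ0
    rw [h1, h2]
    have hs : (∑ k, D.rho k * ∫ s in (0:ℝ)..t₀, Gk (D.Γ k) (w s))
        = (∑ k, D.rho k * ∫ s in (0:ℝ)..σ, Gk (D.Γ k) (w s))
          + ∑ k, D.rho k * ∫ s in σ..t₀, Gk (D.Γ k) (w s) := by
      rw [← Finset.sum_add_distrib]
      exact Finset.sum_congr rfl (fun k _ => by rw [← hadd k]; ring)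
    rw [hs]; ring
  have hw₁ := hsplit w₁ h₁int h₁eq
  have hw₂ := hsplit w₂ h₂int h₂eq
  -- monotone comparison of the integrals
  have hmono : ∀ k : Fin K,
      (∫ s in σ..t₀, Gk (D.Γ k) (w₁ s)) ≤ ∫ s in σ..t₀, Gk (D.Γ k) (w₂ s) := by
    intro k
    rw [intervalIntegral.integral_of_le hσt₀, intervalIntegral.integral_of_le hσt₀]
    have hI₁ : MeasureTheory.IntegrableOn (fun s => Gk (D.Γ k) (w₁ s)) (Set.Ioc σ t₀) volume :=
      (intervalIntegrable_iff_integrableOn_Ioc_of_le hσt₀).mp (hii w₁ h₁int k)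
    have hI₂ : MeasureTheory.IntegrableOn (fun s => Gk (D.Γ k) (w₂ s)) (Set.Ioc σ t₀) volume :=
      (intervalIntegrable_iff_integrableOn_Ioc_of_le hσt₀).mp (hii w₂ h₂int k)
    refine MeasureTheory.setIntegral_mono_on hI₁ hI₂ measurableSet_Ioc ?_
    intro s hs
    exact Gk_antitone (D.Γ k) (hkey s hs)
  have hsum : (∑ k, D.rho k * ∫ s in σ..t₀, Gk (D.Γ k) (w₁ s))
      ≤ ∑ k, D.rho k * ∫ s in σ..t₀, Gk (D.Γ k) (w₂ s) :=
    Finset.sum_le_sum (fun k _ => mul_le_mul_of_nonneg_left (hmono k) (rho_nonneg D k))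
  have : w₁ t₀ ≤ w₂ t₀ := by rw [hw₁, hw₂]; linarith
  linarith


end OverloadedFIFO
end
end

section
/- Let ϑ = (ϑ_1,…,ϑ_K) be a K-tuple of finite Borel measures on [0,∞)² such that ϑ_+(C_x) = 0 for all x ∈ [0,∞)². Then for every ε > 0 there exists κ > 0 such that max_{1≤k≤K} sup_{x∈[0,∞)²} ϑ_k(C_x^κ) < ε. -/
open MeasureTheory Set Filter Topology
open scoped ENNReal

noncomputable section

namespace OverloadedFIFO

lemma aux_unif (μ : Measure ℝ) [IsFiniteMeasure μ] (h : ∀ a : ℝ, μ {a} = 0)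
    {ε : ℝ≥0∞} (hε : 0 < ε) : ∃ κ : ℝ, 0 < κ ∧ ∀ a : ℝ, μ (Metric.ball a κ) < ε := by
  -- tail bound
  obtain ⟨n, hn⟩ : ∃ n : ℕ, μ ((Icc (-(n:ℝ)) n)ᶜ) < ε := by
    have hanti : Antitone (fun n : ℕ => (Icc (-(n:ℝ)) n)ᶜ) := by
      intro m n hmn
      exact compl_subset_compl.2 (Icc_subset_Icc (by simp; exact_mod_cast hmn)
        (by exact_mod_cast hmn))
    have hint : (⋂ n : ℕ, (Icc (-(n:ℝ)) n)ᶜ) = ∅ := by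
      ext x
      simp only [mem_iInter, mem_compl_iff, mem_Icc, mem_empty_iff_false, iff_false, not_forall,
        not_not]
      obtain ⟨n, hn⟩ := exists_nat_ge |x|
      exact ⟨n, by cases abs_le.1 hn; constructor <;> linarith⟩
    have := tendsto_measure_iInter_atTop (μ := μ)
      (fun n => measurableSet_Icc.compl.nullMeasurableSet) hanti ⟨0, measure_ne_top _ _⟩
    rw [hint] at this
    simp only [measure_empty] at this
    exact (this.eventually_lt_const hε).exists
  set R : ℝ := (n : ℝ) with hR
  have hR0 : 0 ≤ R := Nat.cast_nonneg n
  -- local bounds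
  have hloc : ∀ a : ℝ, ∃ r : ℝ, 0 < r ∧ μ (Metric.ball a (2 * r)) < ε := by
    intro a
    have hck := tendsto_measure_cthickening_of_isClosed (μ := μ) (s := {a})
      ⟨1, one_pos, measure_ne_top _ _⟩ isClosed_singleton
    rw [h a] at hck
    obtain ⟨δ, hδ, hδε⟩ := Metric.eventually_nhds_iff.1 (hck.eventually_lt_const hε)
    refine ⟨δ / 3, by linarith, ?_⟩
    have h1 : μ (Metric.cthickening (2 * (δ/3)) {a}) < ε := by
      apply hδε
      rw [Real.dist_eq]
      rw [abs_of_nonneg (by linarith)]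
      simp only [sub_zero]
      linarith
    refine lt_of_le_of_lt (measure_mono ?_) h1
    rw [Metric.cthickening_singleton a (by linarith)]
    exact Metric.ball_subset_closedBall
  choose r hr hrε using hloc
  -- compact cover
  obtain ⟨t, hts, hcov⟩ := (isCompact_Icc (a := -(R+1)) (b := R+1)).elim_nhds_subcover
    (fun a => Metric.ball a (r a)) (fun a _ => Metric.ball_mem_nhds a (hr a))
  have h0mem : (0:ℝ) ∈ Icc (-(R+1)) (R+1) := by constructor <;> linarith
  obtain ⟨b, hbt, -⟩ := mem_iUnion₂.1 (hcov h0mem)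
  have htne : t.Nonempty := ⟨b, hbt⟩
  set κ : ℝ := min 1 (t.inf' htne r) with hκ
  have hκpos : 0 < κ := lt_min one_pos ((Finset.lt_inf'_iff htne).2 fun a _ => hr a)
  refine ⟨κ, hκpos, fun a => ?_⟩
  by_cases ha : a ∈ Icc (-(R+1)) (R+1)
  · obtain ⟨c, hct, hac⟩ := mem_iUnion₂.1 (hcov ha)
    refine lt_of_le_of_lt (measure_mono ?_) (hrε c)
    intro y hy
    have h1 : dist y a < κ := Metric.mem_ball.1 hy
    have h2 : dist a c < r c := Metric.mem_ball.1 hac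
    have h3 : κ ≤ r c := le_trans (min_le_right _ _) (Finset.inf'_le r hct)
    have := dist_triangle y a c
    exact Metric.mem_ball.2 (by linarith)
  · refine lt_of_le_of_lt (measure_mono ?_) hn
    intro y hy
    have h1 : |y - a| < κ := by rw [← Real.dist_eq]; exact Metric.mem_ball.1 hy
    have hκ1 : κ ≤ 1 := min_le_left _ _
    simp only [mem_Icc, not_and_or, not_le] at ha ⊢
    simp only [mem_compl_iff, mem_Icc, not_and_or, not_le]
    cases abs_lt.1 h1 with
    | intro hl hu =>
      rcases ha with ha | ha
      · left; linarith
      · right; linarith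

/-- If a `K`-tuple `ϑ` of finite Borel measures on `[0,∞)²` satisfies
`ϑ_+(C_x) = 0` for all `x ∈ [0,∞)²`, then for every `ε > 0` there is `κ > 0` with
`max_k sup_{x ∈ [0,∞)²} ϑ_k(C_x^κ) < ε`. -/
theorem corner_enlargement_small {K : ℕ}
    (ϑ : Fin K → MeasureTheory.Measure (ℝ × ℝ))
    (hfin : ∀ k, IsFiniteMeasure (ϑ k)) (hsupp : ∀ k, ϑ k Qᶜ = 0)
    (hC : ∀ x ∈ Q, (∑ k, ϑ k (shift Cset x)) = 0) :
    ∀ ε : ℝ, 0 < ε → ∃ κ : ℝ, 0 < κ ∧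
      ∀ k, ∀ x ∈ Q, ϑ k (enlarge (shift Cset x) κ) < ENNReal.ofReal ε := by
  intro ε hε
  classical
  set Θ : Measure (ℝ × ℝ) := ∑ k, ϑ k with hΘ
  have hΘapp : ∀ s : Set (ℝ × ℝ), Θ s = ∑ k, ϑ k s := fun s =>
    Measure.finset_sum_apply _ _ _
  haveI hΘfin : IsFiniteMeasure Θ :=
    ⟨by rw [hΘapp]; exact ENNReal.sum_lt_top.2 fun k _ => measure_lt_top _ _⟩
  -- the two lines are null for Θ
  have hline : ∀ (k : Fin K) (x : ℝ × ℝ), x ∈ Q → ϑ k (shift Cset x) = 0 := by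
    intro k x hx
    have := hC x hx
    exact (Finset.sum_eq_zero_iff.1 this) k (Finset.mem_univ k)
  have hline1 : ∀ a : ℝ, Θ (Prod.fst ⁻¹' {a}) = 0 := by
    intro a
    rw [hΘapp]
    refine Finset.sum_eq_zero fun k _ => ?_
    by_cases ha : 0 ≤ a
    · refine measure_mono_null (t := shift Cset (a, 0) ∪ Qᶜ) ?_ ?_
      · intro y hy
        simp only [mem_preimage, mem_singleton_iff] at hy
        by_cases hyQ : y ∈ Q
        · exact Or.inl ⟨hyQ, Or.inr ⟨by simp [hy], by simpa using hyQ.2⟩⟩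
        · exact Or.inr hyQ
      · exact measure_union_null (hline k (a, 0) ⟨ha, le_refl 0⟩) (hsupp k)
    · refine measure_mono_null (t := Qᶜ) ?_ (hsupp k)
      intro y hy hyQ
      simp only [mem_preimage, mem_singleton_iff] at hy
      exact ha (hy ▸ hyQ.1)
  have hline2 : ∀ a : ℝ, Θ (Prod.snd ⁻¹' {a}) = 0 := by
    intro a
    rw [hΘapp]
    refine Finset.sum_eq_zero fun k _ => ?_
    by_cases ha : 0 ≤ a
    · refine measure_mono_null (t := shift Cset (0, a) ∪ Qᶜ) ?_ ?_
      · intro y hy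
        simp only [mem_preimage, mem_singleton_iff] at hy
        by_cases hyQ : y ∈ Q
        · exact Or.inl ⟨hyQ, Or.inl ⟨by simpa using hyQ.1, by simp [hy]⟩⟩
        · exact Or.inr hyQ
      · exact measure_union_null (hline k (0, a) ⟨le_refl 0, ha⟩) (hsupp k)
    · refine measure_mono_null (t := Qᶜ) ?_ (hsupp k)
      intro y hy hyQ
      simp only [mem_preimage, mem_singleton_iff] at hy
      exact ha (hy ▸ hyQ.2)
  set ν : Measure ℝ := Θ.map Prod.fst + Θ.map Prod.snd with hν
  haveI : IsFiniteMeasure (Θ.map Prod.fst) := Measure.isFiniteMeasure_map _ _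
  haveI : IsFiniteMeasure (Θ.map Prod.snd) := Measure.isFiniteMeasure_map _ _
  have hνatom : ∀ a : ℝ, ν {a} = 0 := by
    intro a
    rw [hν, Measure.add_apply, Measure.map_apply measurable_fst (measurableSet_singleton a),
      Measure.map_apply measurable_snd (measurableSet_singleton a), hline1 a, hline2 a, add_zero]
  have hε2 : (0 : ℝ≥0∞) < ENNReal.ofReal (ε / 2) := ENNReal.ofReal_pos.2 (by linarith)
  obtain ⟨κ, hκ, hκε⟩ := aux_unif ν hνatom hε2
  refine ⟨κ, hκ, fun k x hx => ?_⟩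
  have hmb1 : MeasurableSet (Prod.fst ⁻¹' Metric.ball x.1 κ : Set (ℝ × ℝ)) :=
    (Metric.isOpen_ball.preimage continuous_fst).measurableSet
  have hmb2 : MeasurableSet (Prod.snd ⁻¹' Metric.ball x.2 κ : Set (ℝ × ℝ)) :=
    (Metric.isOpen_ball.preimage continuous_snd).measurableSet
  have hsub : enlarge (shift Cset x) κ ⊆
      (Prod.fst ⁻¹' Metric.ball x.1 κ) ∪ (Prod.snd ⁻¹' Metric.ball x.2 κ) := by
    rintro y ⟨hyQ, z, ⟨hzQ, hzC⟩, hd⟩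
    rcases hzC with ⟨_, h2⟩ | ⟨h1, _⟩
    · right
      have hz2 : z.2 = x.2 := by linarith [sub_eq_zero.1 h2]
      have hle : |y.2 - z.2| ≤ Real.sqrt ((y.1 - z.1) ^ 2 + (y.2 - z.2) ^ 2) := by
        rw [← Real.sqrt_sq_eq_abs]
        exact Real.sqrt_le_sqrt (le_add_of_nonneg_left (sq_nonneg _))
      simp only [mem_preimage, Metric.mem_ball, Real.dist_eq]
      rw [← hz2]
      exact lt_of_le_of_lt hle hd
    · left
      have hz1 : z.1 = x.1 := by linarith [sub_eq_zero.1 h1]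
      have hle : |y.1 - z.1| ≤ Real.sqrt ((y.1 - z.1) ^ 2 + (y.2 - z.2) ^ 2) := by
        rw [← Real.sqrt_sq_eq_abs]
        exact Real.sqrt_le_sqrt (le_add_of_nonneg_right (sq_nonneg _))
      simp only [mem_preimage, Metric.mem_ball, Real.dist_eq]
      rw [← hz1]
      exact lt_of_le_of_lt hle hd
  have hle1 : ∀ s : Set (ℝ × ℝ), ϑ k s ≤ Θ s := by
    intro s
    rw [hΘapp]
    exact Finset.single_le_sum (f := fun k => ϑ k s) (fun _ _ => zero_le) (Finset.mem_univ k)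
  calc ϑ k (enlarge (shift Cset x) κ)
      ≤ ϑ k ((Prod.fst ⁻¹' Metric.ball x.1 κ) ∪ (Prod.snd ⁻¹' Metric.ball x.2 κ)) :=
        measure_mono hsub
    _ ≤ ϑ k (Prod.fst ⁻¹' Metric.ball x.1 κ) + ϑ k (Prod.snd ⁻¹' Metric.ball x.2 κ) :=
        measure_union_le _ _
    _ ≤ Θ (Prod.fst ⁻¹' Metric.ball x.1 κ) + Θ (Prod.snd ⁻¹' Metric.ball x.2 κ) :=
        add_le_add (hle1 _) (hle1 _)
    _ ≤ ν (Metric.ball x.1 κ) + ν (Metric.ball x.2 κ) := by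
        rw [hν]
        simp only [Measure.add_apply]
        rw [Measure.map_apply measurable_fst Metric.isOpen_ball.measurableSet (s := Metric.ball x.1 κ),
          Measure.map_apply measurable_snd Metric.isOpen_ball.measurableSet (s := Metric.ball x.2 κ)]
        exact add_le_add le_self_add le_add_self
    _ < ENNReal.ofReal (ε / 2) + ENNReal.ofReal (ε / 2) :=
        ENNReal.add_lt_add (hκε _) (hκε _)
    _ = ENNReal.ofReal ε := by
        rw [← ENNReal.ofReal_add (by linarith) (by linarith)]
        norm_num


end OverloadedFIFO
end
end
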